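/- Let E be a finite set with a fixpoint-free involution e ↦ ē, let ℓ²_alt(E) be the space of real functions ψ on E with ψ(ē) = −ψ(e), and for e ∈ E let χ_e = δ_e − δ_{ē}. Let W ⊆ ℓ²_alt(E) be a linear subspace, and let f = π_W(χ_e) be the orthogonal projection of χ_e onto W, where f ∈ ℓ²_alt(E). Then f(e) ≥ 0. -/

import Mathlib

/-- for a finite set `E` with a fixpoint-free involution, a subspace `W` of the
alternating functions, and `χ_e = δ_e − δ_{ē}`, the orthogonal projection `f = π_W(χ_e)`
satisfies `f(e) ≥ 0`. -/
theorem stmt8 {E : Type*} [Fintype E] [DecidableEq E]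
    (bar : E → E) (hinv : ∀ e, bar (bar e) = e) (hfpf : ∀ e, bar e ≠ e)
    (W : Submodule ℝ (EuclideanSpace ℝ E)) (hW : ∀ ψ ∈ W, ∀ x, ψ (bar x) = -ψ x)
    (e : E) (χ : EuclideanSpace ℝ E)
    (hχ : χ = WithLp.toLp 2 (fun x => if x = e then 1 else if x = bar e then -1 else 0)) :
    0 ≤ (W.orthogonalProjectionOnto χ : EuclideanSpace ℝ E) e := by
  set f : EuclideanSpace ℝ E := (W.orthogonalProjectionOnto χ : EuclideanSpace ℝ E) with hfdef
  have hne : e ≠ bar e := fun h => hfpf e h.symm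
  have hns : ∀ x : EuclideanSpace ℝ E, ‖x‖ ^ 2 = ∑ i, (x i) ^ 2 := by
    intro x
    rw [EuclideanSpace.norm_eq, Real.sq_sqrt (by positivity)]
    simp [Real.norm_eq_abs, sq_abs]
  have halt : f (bar e) = -f e := hW f (W.orthogonalProjectionOnto χ).2 e
  -- ‖χ - f‖ ≤ ‖χ‖
  have h1 : ‖χ - f‖ ≤ ‖χ‖ := by
    rw [hfdef, ← Submodule.starProjection_apply, Submodule.starProjection_minimal]
    have := ciInf_le (f := fun x : W => ‖χ - (x : EuclideanSpace ℝ E)‖)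
      ⟨0, fun y hy => by rcases hy with ⟨i, rfl⟩; positivity⟩ (⟨0, W.zero_mem⟩ : W)
    simpa using this
  have h2 : ‖χ - f‖ ^ 2 ≤ ‖χ‖ ^ 2 := by
    have := norm_nonneg (χ - f)
    nlinarith
  have hχ2 : ‖χ‖ ^ 2 = 2 := by
    rw [hns, hχ]
    have key : ∀ x : E, ((if x = e then (1 : ℝ) else if x = bar e then -1 else 0)) ^ 2
        = (if x = e then 1 else 0) + (if x = bar e then 1 else 0) := by
      intro x
      by_cases h1 : x = e
      · subst h1; simp [hne]
      · by_cases h2 : x = bar e <;> simp [h1, h2, hfpf e]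
    simp only [PiLp.toLp_apply]
    simp only [key]
    rw [Finset.sum_add_distrib, Finset.sum_ite_eq' _ e, Finset.sum_ite_eq' _ (bar e)]
    norm_num
  have hlb : (χ e - f e) ^ 2 + (χ (bar e) - f (bar e)) ^ 2 ≤ ‖χ - f‖ ^ 2 := by
    rw [hns]
    have : ∀ x : E, (χ - f) x = χ x - f x := fun x => PiLp.sub_apply (x := χ) (y := f) (i := x)
    calc (χ e - f e) ^ 2 + (χ (bar e) - f (bar e)) ^ 2
        = ∑ x ∈ ({e, bar e} : Finset E), ((χ - f) x) ^ 2 := by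
          rw [Finset.sum_pair hne, this, this]
      _ ≤ ∑ x, ((χ - f) x) ^ 2 := by
          apply Finset.sum_le_sum_of_subset_of_nonneg (Finset.subset_univ _)
          intro i _ _; positivity
  have hχe : χ e = 1 := by rw [hχ]; simp
  have hχbe : χ (bar e) = -1 := by rw [hχ]; simp [hne.symm]
  rw [hχe, hχbe, halt] at hlb
  nlinarith [hlb, h2, hχ2]
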